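/- Stochastic primal-dual setup: let (Ω, ℱ, ℙ) be a probability space, Θ a measurable space, δ ∈ (0, 1/2), and V, g : Θ → ℝ measurable with |g(θ)| ≤ 1 − δ for all θ; assume the dual function d(λ) := sup_{θ∈Θ} (V(θ) + λ·g(θ)) is finite for every λ ≥ 0, and that λ⋆ ≥ 0 satisfies d(λ⋆) = inf_{λ ≥ 0} d(λ). Fix η > 0, ε ≥ 0. Let (λ_k)_{k≥0}, (ĝ_k)_{k≥0} be real-valued random variables and (θ_k)_{k≥1} Θ-valued random variables such that for every k ≥ 0, almost surely: λ₀ ≥ 0; |ĝ_k| ≤ 1 − δ; λ_{k+1} = max(0, λ_k − η·ĝ_k); d(λ_k) ≤ V(θ_{k+1}) + λ_k·g(θ_{k+1}) + ε; λ_k is σ(θ_{k+1})-measurable and E[ĝ_k | σ(θ_{k+1})] = g(θ_{k+1}); λ₀ is square-integrable and each V(θ_{k+1}) is integrable. Suppose additionally there exist θ̃ ∈ Θ and C > 0 with g(θ̃) ≥ C (strict feasibility). Then sup_{k ≥ 1} (1/k)·Σ_{u=0}^{k−1} E[λ_u] < ∞. -/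

import Mathlib

open MeasureTheory Finset

set_option maxHeartbeats 1000000 in
/-- intermediate claim of Lemma 6: under the Safe Primal-Dual
dynamics and a strictly feasible point, the Cesàro means of the expected dual
iterates are uniformly bounded. -/
theorem stmt_14 {Ω Θ : Type*} [MeasurableSpace Ω] {mΘ : MeasurableSpace Θ}
    (μ : Measure Ω) [IsProbabilityMeasure μ]
    (δ : ℝ) (hδ0 : 0 < δ) (hδ : δ < 1 / 2)
    (V g : Θ → ℝ) (hV : Measurable V) (hg : Measurable g)
    (hgb : ∀ θ, |g θ| ≤ 1 - δ)
    (d : ℝ → ℝ) (hd : ∀ l : ℝ, 0 ≤ l → IsLUB (Set.range fun θ => V θ + l * g θ) (d l))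
    (lstar : ℝ) (hlstar : 0 ≤ lstar) (hmin : ∀ l : ℝ, 0 ≤ l → d lstar ≤ d l)
    (η : ℝ) (hη : 0 < η) (ε : ℝ) (hε : 0 ≤ ε)
    (lam ghat : ℕ → Ω → ℝ) (th : ℕ → Ω → Θ)
    (hthMeas : ∀ k : ℕ, Measurable (th (k + 1)))
    (hlam0 : ∀ᵐ ω ∂μ, 0 ≤ lam 0 ω)
    (hghatb : ∀ k : ℕ, ∀ᵐ ω ∂μ, |ghat k ω| ≤ 1 - δ)
    (hupdate : ∀ k : ℕ, ∀ᵐ ω ∂μ, lam (k + 1) ω = max 0 (lam k ω - η * ghat k ω))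
    (hprimal : ∀ k : ℕ, ∀ᵐ ω ∂μ,
      d (lam k ω) ≤ V (th (k + 1) ω) + lam k ω * g (th (k + 1) ω) + ε)
    (hadapted : ∀ k : ℕ, Measurable[MeasurableSpace.comap (th (k + 1)) mΘ] (lam k))
    (hunbiased : ∀ k : ℕ,
      μ[ghat k | MeasurableSpace.comap (th (k + 1)) mΘ] =ᵐ[μ] fun ω => g (th (k + 1) ω))
    (hlam0L2 : MemLp (lam 0) 2 μ)
    (hVint : ∀ k : ℕ, Integrable (fun ω => V (th (k + 1) ω)) μ)
    -- strict feasibility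
    (θtilde : Θ) (C : ℝ) (hC : 0 < C) (hstrict : C ≤ g θtilde) :
    ∃ M : ℝ, ∀ k : ℕ, 1 ≤ k →
      (1 / (k : ℝ)) * ∑ u ∈ Finset.range k, ∫ ω, lam u ω ∂μ ≤ M := by
  classical
  have hδ1 : (0:ℝ) ≤ 1 - δ := by linarith
  have hVle : ∀ θ, V θ ≤ d 0 := by
    intro θ
    have h := (hd 0 le_rfl).1 ⟨θ, rfl⟩
    simpa using h
  have hdge : ∀ x : ℝ, 0 ≤ x → V θtilde + C * x ≤ d x := by
    intro x hx
    have h1 : V θtilde + x * g θtilde ≤ d x := (hd x hx).1 ⟨θtilde, rfl⟩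
    nlinarith [mul_le_mul_of_nonneg_left hstrict hx]
  have hVtd : V θtilde ≤ d 0 := hVle θtilde
  -- sigma algebras and measurability
  have hm : ∀ k : ℕ, MeasurableSpace.comap (th (k+1)) mΘ ≤ ‹MeasurableSpace Ω› :=
    fun k => (hthMeas k).comap_le
  have hlamMeas : ∀ k, Measurable (lam k) := fun k => (hadapted k).mono (hm k) le_rfl
  -- nonnegativity
  have hpos : ∀ k, ∀ᵐ ω ∂μ, 0 ≤ lam k ω := by
    intro k
    cases k with
    | zero => exact hlam0
    | succ n =>
      filter_upwards [hupdate n] with ω h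
      rw [h]; exact le_max_left _ _
  -- L2 bounds
  have hL2 : ∀ k, MemLp (lam k) 2 μ := by
    intro k
    induction k with
    | zero => exact hlam0L2
    | succ n ih =>
      have hmaj : MemLp (fun ω => ‖lam n ω‖ + η * (1-δ)) 2 μ := by
        have := ih.norm.add (memLp_const (μ := μ) (p := 2) (η * (1-δ)))
        simpa [Pi.add_def] using this
      refine MemLp.of_le hmaj ((hlamMeas (n+1)).aestronglyMeasurable) ?_
      filter_upwards [hupdate n, hghatb n] with ω hu hb
      have hηδ : 0 ≤ η * (1-δ) := mul_nonneg hη.le hδ1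
      have h1 : |lam (n+1) ω| ≤ |lam n ω| + η * (1-δ) := by
        rw [hu]
        have h2 : |max 0 (lam n ω - η * ghat n ω)| ≤ |lam n ω - η * ghat n ω| := by
          rw [abs_of_nonneg (le_max_left _ _)]
          exact max_le (abs_nonneg _) (le_abs_self _)
        have h3 : |lam n ω - η * ghat n ω| ≤ |lam n ω| + η * |ghat n ω| := by
          calc |lam n ω - η * ghat n ω| ≤ |lam n ω| + |η * ghat n ω| := abs_sub _ _
            _ = |lam n ω| + η * |ghat n ω| := by rw [abs_mul, abs_of_pos hη]
        have h4 : η * |ghat n ω| ≤ η * (1-δ) := mul_le_mul_of_nonneg_left hb hη.le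
        linarith
      have hn : ‖‖lam n ω‖ + η * (1-δ)‖ = |lam n ω| + η * (1-δ) := by
        rw [Real.norm_eq_abs, Real.norm_eq_abs, abs_of_nonneg (by positivity)]
      rw [Real.norm_eq_abs]
      calc |lam (n+1) ω| ≤ |lam n ω| + η * (1-δ) := h1
        _ = ‖‖lam n ω‖ + η * (1-δ)‖ := hn.symm
  have hInt : ∀ k, Integrable (lam k) μ := fun k => (hL2 k).integrable one_le_two
  have hIntSq : ∀ k, Integrable (fun ω => (lam k ω)^2) μ := fun k => (hL2 k).integrable_sq
  have hIntlG : ∀ k, Integrable (fun ω => lam k ω * g (th (k+1) ω)) μ := by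
    intro k
    have := (hInt k).bdd_mul (c := 1 - δ)
      ((hg.comp (hthMeas k)).aestronglyMeasurable)
      (Filter.Eventually.of_forall fun ω => by
        simpa [Real.norm_eq_abs] using hgb (th (k+1) ω))
    simpa [mul_comm] using this
  -- constants
  set K : ℝ := (d 0 + ε - V θtilde) / C with hKdef
  have hK0 : 0 ≤ K := div_nonneg (by linarith) hC.le
  set B : ℝ := 2*η*(d 0 - V θtilde + ε) + η^2*(1-δ)^2 + 2*η*C*K + 2*η*(1-δ)*K with hBdef
  have hB0 : 0 ≤ B := by
    have h1 : 0 ≤ 2*η*(d 0 - V θtilde + ε) := by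
      apply mul_nonneg (by positivity) (by linarith)
    have h2 : 0 ≤ η^2*(1-δ)^2 := by positivity
    have h3 : 0 ≤ 2*η*C*K := by positivity
    have h4 : 0 ≤ 2*η*(1-δ)*K := by
      apply mul_nonneg (mul_nonneg (by positivity) hδ1) hK0
    linarith
  set a : ℕ → ℝ := fun k => ∫ ω, lam k ω ∂μ with hadef
  set s : ℕ → ℝ := fun k => ∫ ω, (lam k ω)^2 ∂μ with hsdef
  have ha0 : ∀ k, 0 ≤ a k := fun k => integral_nonneg_of_ae (hpos k)
  have hs0 : ∀ k, 0 ≤ s k := fun k => integral_nonneg fun ω => sq_nonneg _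
  -- key one-step inequality
  have key : ∀ k : ℕ, s (k+1) ≤ s k - 2*η*C*(a k) + B := by
    intro k
    by_cases hgi : Integrable (ghat k) μ
    · -- nondegenerate case: use the conditional expectation identity
      have hIntlg : Integrable (fun ω => lam k ω * ghat k ω) μ := by
        have := (hInt k).bdd_mul (c := 1 - δ) hgi.1
          (by filter_upwards [hghatb k] with ω h; simpa [Real.norm_eq_abs] using h)
        simpa [mul_comm] using this
      have hpull : μ[(fun ω => lam k ω * ghat k ω) | MeasurableSpace.comap (th (k+1)) mΘ]
          =ᵐ[μ] fun ω => lam k ω * (μ[ghat k | MeasurableSpace.comap (th (k+1)) mΘ]) ω := by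
        have := condExp_mul_of_stronglyMeasurable_left (μ := μ)
          (m := MeasurableSpace.comap (th (k+1)) mΘ)
          (hadapted k).stronglyMeasurable
          (f := lam k) (g := ghat k) (by simpa [Pi.mul_def] using hIntlg) hgi
        simpa [Pi.mul_def] using this
      have heq : ∫ ω, lam k ω * ghat k ω ∂μ = ∫ ω, lam k ω * g (th (k+1) ω) ∂μ := by
        rw [← integral_condExp (hm k) (f := fun ω => lam k ω * ghat k ω)]
        refine integral_congr_ae ?_
        filter_upwards [hpull, hunbiased k] with ω h1 h2
        rw [h1, h2]
      -- pointwise lower bound on the inner product term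
      have hlow : ∀ᵐ ω ∂μ, (V θtilde - d 0 - ε) + C * lam k ω ≤ lam k ω * g (th (k+1) ω) := by
        filter_upwards [hprimal k, hpos k] with ω h1 h2
        have h3 := hdge (lam k ω) h2
        have h4 := hVle (th (k+1) ω)
        linarith
      have hlowint : (V θtilde - d 0 - ε) + C * a k ≤ ∫ ω, lam k ω * g (th (k+1) ω) ∂μ := by
        have hIL : Integrable (fun ω => (V θtilde - d 0 - ε) + C * lam k ω) μ := by
          exact (integrable_const _).add ((hInt k).const_mul C)
        have h := integral_mono_ae hIL (hIntlG k) hlow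
        rwa [integral_add (integrable_const _) ((hInt k).const_mul C), integral_const,
          integral_const_mul _, probReal_univ, smul_eq_mul, one_mul] at h
      -- pointwise square inequality
      have hsq : ∀ᵐ ω ∂μ, (lam (k+1) ω)^2 ≤
          (lam k ω)^2 - 2*η*(lam k ω * ghat k ω) + η^2*(1-δ)^2 := by
        filter_upwards [hupdate k, hghatb k] with ω hu hb
        have h1 : max 0 (lam k ω - η * ghat k ω) ≤ |lam k ω - η * ghat k ω| :=
          max_le (abs_nonneg _) (le_abs_self _)
        have h2 : (lam (k+1) ω)^2 ≤ (lam k ω - η * ghat k ω)^2 := by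
          rw [hu]
          calc (max 0 (lam k ω - η * ghat k ω))^2 ≤ |lam k ω - η * ghat k ω|^2 :=
            pow_le_pow_left₀ (le_max_left _ _) h1 2
          _ = (lam k ω - η * ghat k ω)^2 := sq_abs _
        have h3 : (ghat k ω)^2 ≤ (1-δ)^2 := by nlinarith [abs_le.1 hb]
        have h4 : η^2*(ghat k ω)^2 ≤ η^2*(1-δ)^2 :=
          mul_le_mul_of_nonneg_left h3 (sq_nonneg η)
        have h5 : (lam k ω - η * ghat k ω)^2 =
            (lam k ω)^2 - 2*η*(lam k ω * ghat k ω) + η^2*(ghat k ω)^2 := by ring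
        linarith
      have hIR : Integrable (fun ω =>
          (lam k ω)^2 - 2*η*(lam k ω * ghat k ω) + η^2*(1-δ)^2) μ := by
        exact ((hIntSq k).sub (hIntlg.const_mul (2*η))).add (integrable_const _)
      have hmono := integral_mono_ae (hIntSq (k+1)) hIR hsq
      rw [integral_add (by exact (hIntSq k).sub (hIntlg.const_mul (2*η))) (integrable_const _),
        integral_sub (hIntSq k) (hIntlg.const_mul (2*η)), integral_const_mul _, integral_const,
        probReal_univ, smul_eq_mul, one_mul, heq] at hmono
      -- combine
      have h6 : 2*η*((V θtilde - d 0 - ε) + C * a k) ≤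
          2*η*(∫ ω, lam k ω * g (th (k+1) ω) ∂μ) :=
        mul_le_mul_of_nonneg_left hlowint (by positivity)
      have h7 : 0 ≤ 2*η*C*K := by positivity
      have h8 : 0 ≤ 2*η*(1-δ)*K := mul_nonneg (mul_nonneg (by positivity) hδ1) hK0
      rw [hBdef]
      nlinarith
    · -- degenerate case: ghat k is not integrable, so g ∘ th (k+1) = 0 a.e.
      have hg0 : (fun ω => g (th (k+1) ω)) =ᵐ[μ] (fun _ => (0:ℝ)) := by
        have h := (hunbiased k).symm
        rw [condExp_of_not_integrable hgi] at h
        exact h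
      have hlamK : ∀ᵐ ω ∂μ, lam k ω ≤ K := by
        filter_upwards [hprimal k, hpos k, hg0] with ω h1 h2 h3
        have h4 := hdge (lam k ω) h2
        have h5 := hVle (th (k+1) ω)
        rw [h3, mul_zero] at h1
        rw [hKdef, le_div_iff₀ hC]
        nlinarith
      have haK : a k ≤ K := by
        have h := integral_mono_ae (hInt k) (integrable_const K) hlamK
        simpa using h
      have hsq : ∀ᵐ ω ∂μ, (lam (k+1) ω)^2 ≤
          (lam k ω)^2 + 2*η*(1-δ)*(lam k ω) + η^2*(1-δ)^2 := by
        filter_upwards [hupdate k, hghatb k, hpos k] with ω hu hb hp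
        have h0' : 0 ≤ lam (k+1) ω := by rw [hu]; exact le_max_left _ _
        have h1 : lam (k+1) ω ≤ lam k ω + η*(1-δ) := by
          rw [hu]
          refine max_le (by positivity) ?_
          have := abs_le.1 hb
          nlinarith
        nlinarith [mul_self_le_mul_self h0' h1]
      have hIR : Integrable (fun ω =>
          (lam k ω)^2 + 2*η*(1-δ)*(lam k ω) + η^2*(1-δ)^2) μ := by
        exact ((hIntSq k).add ((hInt k).const_mul (2*η*(1-δ)))).add (integrable_const _)
      have hmono := integral_mono_ae (hIntSq (k+1)) hIR hsq
      rw [integral_add (by exact (hIntSq k).add ((hInt k).const_mul (2*η*(1-δ))))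
        (integrable_const _), integral_add (hIntSq k) ((hInt k).const_mul (2*η*(1-δ))),
        integral_const_mul _, integral_const, probReal_univ, smul_eq_mul,
        one_mul] at hmono
      have h7 : 2*η*C*(a k) ≤ 2*η*C*K := mul_le_mul_of_nonneg_left haK (by positivity)
      have h8 : 2*η*(1-δ)*(a k) ≤ 2*η*(1-δ)*K :=
        mul_le_mul_of_nonneg_left haK (mul_nonneg (by positivity) hδ1)
      have h9 : 0 ≤ 2*η*(d 0 - V θtilde + ε) := mul_nonneg (by positivity) (by linarith)
      rw [hBdef]
      linarith
  -- telescoping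
  have hsum : ∀ k : ℕ, s k + 2*η*C * ∑ u ∈ Finset.range k, a u ≤ s 0 + k * B := by
    intro k
    induction k with
    | zero => simp
    | succ n ih =>
      rw [Finset.sum_range_succ, mul_add]
      have hkey := key n
      push_cast
      linarith
  -- conclusion
  refine ⟨(s 0 + B)/(2*η*C), ?_⟩
  intro k hk
  have hk' : (1:ℝ) ≤ (k:ℝ) := by exact_mod_cast hk
  have hkpos : (0:ℝ) < (k:ℝ) := by linarith
  have hd2 : (0:ℝ) < 2*η*C := by positivity
  have h1 : 2*η*C * ∑ u ∈ Finset.range k, a u ≤ s 0 + (k:ℝ)*B := by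
    have := hsum k; linarith [hs0 k]
  have h2 : s 0 + (k:ℝ)*B ≤ (k:ℝ)*(s 0 + B) := by nlinarith [hs0 0]
  have h3 : ∑ u ∈ Finset.range k, a u ≤ ((k:ℝ)*(s 0 + B))/(2*η*C) := by
    rw [le_div_iff₀ hd2, mul_comm]
    linarith
  calc (1 / (k:ℝ)) * ∑ u ∈ Finset.range k, a u
      ≤ (1 / (k:ℝ)) * (((k:ℝ)*(s 0 + B))/(2*η*C)) := by
        apply mul_le_mul_of_nonneg_left h3 (by positivity)
    _ = (s 0 + B)/(2*η*C) := by
        field_simp
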